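/- Let 1 ≤ θ < 2. There exists a constant C > 0, depending only on θ, such that for all a, b, c ∈ ℝ: | |a + b + c|^θ − |a + b|^θ − |a + c|^θ + |a|^θ | ≤ C (|c|^{θ−1} + |b|^{θ−1}) |b|. -/

import Mathlib

open Real Asymptotics Filter

private lemma my_rpow_subadd {p : ℝ} (hp0 : 0 ≤ p) (hp1 : p ≤ 1) {x y : ℝ}
    (hx : 0 ≤ x) (hy : 0 ≤ y) : (x + y) ^ p ≤ x ^ p + y ^ p := by
  lift x to NNReal using hx
  lift y to NNReal using hy
  exact_mod_cast NNReal.rpow_add_le_add_rpow x y hp0 hp1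

private lemma my_rpow_holder' {α : ℝ} (hα0 : 0 ≤ α) (hα1 : α ≤ 1) {x y : ℝ}
    (hy : 0 ≤ y) (hxy : y ≤ x) : x ^ α - y ^ α ≤ (x - y) ^ α := by
  have h : x ^ α ≤ (x - y) ^ α + y ^ α := by
    have := my_rpow_subadd hα0 hα1 (sub_nonneg.mpr hxy) hy
    simpa using this
  linarith

private lemma my_rpow_holder {α : ℝ} (hα0 : 0 ≤ α) (hα1 : α ≤ 1) {x y : ℝ}
    (hx : 0 ≤ x) (hy : 0 ≤ y) : |x ^ α - y ^ α| ≤ |x - y| ^ α := by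
  rcases le_total y x with h | h
  · rw [abs_of_nonneg (sub_nonneg.mpr (Real.rpow_le_rpow hy h hα0)),
      abs_of_nonneg (sub_nonneg.mpr h)]
    exact my_rpow_holder' hα0 hα1 hy h
  · rw [abs_sub_comm, abs_sub_comm x y,
      abs_of_nonneg (sub_nonneg.mpr (Real.rpow_le_rpow hx h hα0)),
      abs_of_nonneg (sub_nonneg.mpr h)]
    exact my_rpow_holder' hα0 hα1 hx h

private lemma phi_eq {θ : ℝ} (hθ1 : 1 < θ) {t : ℝ} (ht : 0 ≤ t) :
    t * |t| ^ (θ - 2) = t ^ (θ - 1) := by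
  rcases eq_or_lt_of_le ht with h | h
  · rw [← h, zero_mul, Real.zero_rpow (by intro hc; linarith [sub_eq_zero.mp hc])]
  · rw [abs_of_pos h]
    have : θ - 1 = 1 + (θ - 2) := by ring
    rw [this, Real.rpow_add h, Real.rpow_one]

private lemma phi_holder {θ : ℝ} (hθ1 : 1 < θ) (hθ2 : θ < 2) (u v : ℝ) :
    |θ * u * |u| ^ (θ - 2) - θ * v * |v| ^ (θ - 2)| ≤ 2 * θ * |u - v| ^ (θ - 1) := by
  have hα0 : (0:ℝ) ≤ θ - 1 := by linarith
  have hα1 : θ - 1 ≤ 1 := by linarith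
  have hθ0 : (0:ℝ) < θ := by linarith
  have hbn : (0:ℝ) ≤ |u - v| ^ (θ - 1) := Real.rpow_nonneg (abs_nonneg _) _
  rcases le_total 0 u with hu | hu <;> rcases le_total 0 v with hv | hv
  · rw [mul_assoc, mul_assoc, phi_eq hθ1 hu, phi_eq hθ1 hv, ← mul_sub, abs_mul,
      abs_of_pos hθ0]
    calc θ * |u ^ (θ-1) - v ^ (θ-1)| ≤ θ * |u - v| ^ (θ - 1) :=
          mul_le_mul_of_nonneg_left (my_rpow_holder hα0 hα1 hu hv) hθ0.le
      _ ≤ 2 * θ * |u - v| ^ (θ - 1) := by nlinarith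
  · -- u ≥ 0, v ≤ 0
    have h1 : θ * u * |u| ^ (θ - 2) = θ * (u ^ (θ - 1)) := by
      rw [mul_assoc, phi_eq hθ1 hu]
    have h2 : θ * v * |v| ^ (θ - 2) = -(θ * ((-v) ^ (θ - 1))) := by
      rw [show θ * v * |v| ^ (θ-2) = -(θ * ((-v) * |(-v)| ^ (θ-2))) by rw [abs_neg]; ring,
        phi_eq hθ1 (by linarith : (0:ℝ) ≤ -v)]
    have hd : |u - v| = u - v := abs_of_nonneg (by linarith)
    have hb1 : u ^ (θ - 1) ≤ (u - v) ^ (θ - 1) :=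
      Real.rpow_le_rpow hu (by linarith) hα0
    have hb2 : (-v) ^ (θ - 1) ≤ (u - v) ^ (θ - 1) :=
      Real.rpow_le_rpow (by linarith) (by linarith) hα0
    have hn1 : (0:ℝ) ≤ u ^ (θ - 1) := Real.rpow_nonneg hu _
    have hn2 : (0:ℝ) ≤ (-v) ^ (θ - 1) := Real.rpow_nonneg (by linarith) _
    rw [h1, h2, sub_neg_eq_add, abs_of_nonneg (by positivity), hd]
    nlinarith
  · -- v ≥ 0, u ≤ 0 : symmetric
    have h1 : θ * v * |v| ^ (θ - 2) = θ * (v ^ (θ - 1)) := by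
      rw [mul_assoc, phi_eq hθ1 hv]
    have h2 : θ * u * |u| ^ (θ - 2) = -(θ * ((-u) ^ (θ - 1))) := by
      rw [show θ * u * |u| ^ (θ-2) = -(θ * ((-u) * |(-u)| ^ (θ-2))) by rw [abs_neg]; ring,
        phi_eq hθ1 (by linarith : (0:ℝ) ≤ -u)]
    have hd : |u - v| = v - u := by rw [abs_sub_comm]; exact abs_of_nonneg (by linarith)
    have hb1 : v ^ (θ - 1) ≤ (v - u) ^ (θ - 1) :=
      Real.rpow_le_rpow hv (by linarith) hα0
    have hb2 : (-u) ^ (θ - 1) ≤ (v - u) ^ (θ - 1) :=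
      Real.rpow_le_rpow (by linarith) (by linarith) hα0
    have hn1 : (0:ℝ) ≤ v ^ (θ - 1) := Real.rpow_nonneg hv _
    have hn2 : (0:ℝ) ≤ (-u) ^ (θ - 1) := Real.rpow_nonneg (by linarith) _
    rw [h1, h2, hd]
    rw [show -(θ * (-u) ^ (θ-1)) - θ * v ^ (θ-1) = -(θ * (-u) ^ (θ-1) + θ * v ^ (θ-1)) by ring,
      abs_neg, abs_of_nonneg (by positivity)]
    nlinarith
  · -- both ≤ 0
    have h2 : ∀ w : ℝ, w ≤ 0 → θ * w * |w| ^ (θ - 2) = -(θ * ((-w) ^ (θ - 1))) := by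
      intro w hw
      rw [show θ * w * |w| ^ (θ-2) = -(θ * ((-w) * |(-w)| ^ (θ-2))) by rw [abs_neg]; ring,
        phi_eq hθ1 (by linarith : (0:ℝ) ≤ -w)]
    rw [h2 u hu, h2 v hv,
      show -(θ * (-u) ^ (θ-1)) - -(θ * (-v) ^ (θ-1)) = θ * ((-v) ^ (θ-1) - (-u) ^ (θ-1)) by ring,
      abs_mul, abs_of_pos hθ0]
    calc θ * |(-v) ^ (θ-1) - (-u) ^ (θ-1)| ≤ θ * |(-v) - (-u)| ^ (θ - 1) :=
          mul_le_mul_of_nonneg_left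
            (my_rpow_holder hα0 hα1 (by linarith) (by linarith)) hθ0.le
      _ = θ * |u - v| ^ (θ - 1) := by rw [show (-v) - (-u) = u - v by ring]
      _ ≤ 2 * θ * |u - v| ^ (θ - 1) := by nlinarith

private lemma my_hasDerivAt_abs_rpow {θ : ℝ} (hθ1 : 1 < θ) (hθ2 : θ < 2) (t : ℝ) :
    HasDerivAt (fun s : ℝ => |s| ^ θ) (θ * t * |t| ^ (θ - 2)) t := by
  rcases lt_trichotomy t 0 with ht | ht | ht
  · have key : HasDerivAt (fun s : ℝ => (-s) ^ θ) (θ * (-t) ^ (θ - 1) * (-1)) t :=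
      (Real.hasDerivAt_rpow_const (Or.inl (by linarith : -t ≠ 0))).comp t
        ((hasDerivAt_id t).neg)
    have heq : (fun s : ℝ => |s| ^ θ) =ᶠ[nhds t] (fun s : ℝ => (-s) ^ θ) := by
      filter_upwards [eventually_lt_nhds ht] with s hs
      rw [abs_of_neg hs]
    have hval : θ * (-t) ^ (θ - 1) * (-1) = θ * t * |t| ^ (θ - 2) := by
      rw [abs_of_neg ht, show θ * t * (-t) ^ (θ-2) = -(θ * ((-t) * (-t) ^ (θ-2))) by ring,
        show (-t) * (-t) ^ (θ-2) = (-t) * |(-t)| ^ (θ-2) by rw [abs_of_pos (by linarith)],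
        phi_eq hθ1 (by linarith : (0:ℝ) ≤ -t)]
      ring
    exact hval ▸ key.congr_of_eventuallyEq heq
  · subst ht
    have h0 : θ * (0:ℝ) * |(0:ℝ)| ^ (θ - 2) = 0 := by ring
    rw [h0]
    rw [hasDerivAt_iff_isLittleO]
    have hfeq : (fun s : ℝ => |s| ^ θ - |(0:ℝ)| ^ θ - (s - 0) • (0:ℝ)) =
        fun s : ℝ => |s| ^ (θ - 1) * |s| := by
      funext s
      rw [abs_zero, Real.zero_rpow (by linarith)]
      rcases eq_or_ne s 0 with rfl | hs
      · simp [Real.zero_rpow (by linarith : θ ≠ 0)]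
      · have h := Real.rpow_add (abs_pos.mpr hs) (θ - 1) 1
        rw [Real.rpow_one, show θ - 1 + 1 = θ by ring] at h
        simp only [smul_zero, sub_zero]
        exact h
    rw [hfeq]
    have h1 : (fun s : ℝ => |s| ^ (θ - 1)) =o[nhds (0:ℝ)] (fun _ => (1:ℝ)) := by
      rw [isLittleO_one_iff]
      have hc : ContinuousAt (fun s : ℝ => |s| ^ (θ - 1)) 0 :=
        (Real.continuousAt_rpow_const _ _ (Or.inr (by linarith))).comp
          continuous_abs.continuousAt
      have := hc.tendsto
      simpa [Real.zero_rpow (show θ - 1 ≠ 0 by intro h; linarith [sub_eq_zero.mp h])] using this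
    have h2 : (fun s : ℝ => |s|) =O[nhds (0:ℝ)] (fun s : ℝ => s - 0) :=
      isBigO_of_le _ (fun s => by simp)
    have := h1.mul_isBigO h2
    simpa using this
  · have key : HasDerivAt (fun s : ℝ => s ^ θ) (θ * t ^ (θ - 1)) t :=
      Real.hasDerivAt_rpow_const (Or.inl ht.ne')
    have heq : (fun s : ℝ => |s| ^ θ) =ᶠ[nhds t] (fun s : ℝ => s ^ θ) := by
      filter_upwards [eventually_gt_nhds ht] with s hs
      rw [abs_of_pos hs]
    have hval : θ * t ^ (θ - 1) = θ * t * |t| ^ (θ - 2) := by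
      rw [mul_assoc, phi_eq hθ1 ht.le]
    exact hval ▸ key.congr_of_eventuallyEq heq

/-- Lemma 2.3 of the paper: a second-difference estimate for the power function `t ↦ |t|^θ`
in the range `1 ≤ θ < 2` (for `θ = 1`, `|c|^(θ-1)` and `|b|^(θ-1)` are interpreted with the
real-power convention `0 ^ 0 = 1`). -/
theorem abs_rpow_second_difference_estimate (θ : ℝ) (hθ₁ : 1 ≤ θ) (hθ₂ : θ < 2) :
    ∃ C > (0:ℝ), ∀ a b c : ℝ,
      |(|a + b + c| ^ θ - |a + b| ^ θ - |a + c| ^ θ + |a| ^ θ)|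
        ≤ C * (|c| ^ (θ - 1) + |b| ^ (θ - 1)) * |b| := by
  rcases eq_or_lt_of_le hθ₁ with h1 | h1
  · -- θ = 1
    subst h1
    refine ⟨2, by norm_num, fun a b c => ?_⟩
    simp only [sub_self, Real.rpow_zero, Real.rpow_one]
    have e1 : |(|a + b + c| - |a + c|)| ≤ |b| := by
      have := abs_abs_sub_abs_le_abs_sub (a + b + c) (a + c)
      simpa [show a + b + c - (a + c) = b by ring] using this
    have e2 : |(|a + b| - |a|)| ≤ |b| := by
      have := abs_abs_sub_abs_le_abs_sub (a + b) a
      simpa using this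
    calc |(|a + b + c| - |a + b| - |a + c| + |a|)|
        = |(|a + b + c| - |a + c|) - (|a + b| - |a|)| := by ring_nf
      _ ≤ |(|a + b + c| - |a + c|)| + |(|a + b| - |a|)| := abs_sub _ _
      _ ≤ |b| + |b| := add_le_add e1 e2
      _ ≤ 2 * (1 + 1) * |b| := by nlinarith [abs_nonneg b]
  · -- 1 < θ
    refine ⟨2 * θ, by linarith, fun a b c => ?_⟩
    set g : ℝ → ℝ := fun s => |s| ^ θ with hg
    set φ : ℝ → ℝ := fun s => θ * s * |s| ^ (θ - 2) with hφ
    -- F t = g (a + c + t) - g (a + t)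
    set F : ℝ → ℝ := fun t => g (a + c + t) - g (a + t) with hF
    have hF' : ∀ t, HasDerivAt F (φ (a + c + t) - φ (a + t)) t := by
      intro t
      have d1 : HasDerivAt (fun t : ℝ => g (a + c + t)) (φ (a + c + t)) t := by
        have := (my_hasDerivAt_abs_rpow h1 hθ₂ (a + c + t)).comp t
          ((hasDerivAt_id t).const_add (a + c))
        simpa [hg, hφ, Function.comp_def] using this
      have d2 : HasDerivAt (fun t : ℝ => g (a + t)) (φ (a + t)) t := by
        have := (my_hasDerivAt_abs_rpow h1 hθ₂ (a + t)).comp t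
          ((hasDerivAt_id t).const_add a)
        simpa [hg, hφ, Function.comp_def] using this
      exact d1.sub d2
    have hbound : ∀ t : ℝ, ‖φ (a + c + t) - φ (a + t)‖ ≤ 2 * θ * |c| ^ (θ - 1) := by
      intro t
      have := phi_holder h1 hθ₂ (a + c + t) (a + t)
      simpa [hφ, Real.norm_eq_abs, show a + c + t - (a + t) = c by ring] using this
    have key : |F b - F 0| ≤ 2 * θ * |c| ^ (θ - 1) * |b| := by
      have := Convex.norm_image_sub_le_of_norm_hasDerivWithin_le
        (f := F) (f' := fun t => φ (a + c + t) - φ (a + t))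
        (C := 2 * θ * |c| ^ (θ - 1)) (s := Set.univ)
        (fun x _ => (hF' x).hasDerivWithinAt)
        (fun x _ => hbound x) convex_univ (Set.mem_univ 0) (Set.mem_univ b)
      simpa [Real.norm_eq_abs] using this
    have hFb : F b - F 0 = |a + b + c| ^ θ - |a + b| ^ θ - |a + c| ^ θ + |a| ^ θ := by
      simp only [hF, hg, add_zero]
      rw [show a + c + b = a + b + c by ring]
      ring
    rw [hFb] at key
    have hmono : 2 * θ * |c| ^ (θ - 1) * |b| ≤ 2 * θ * (|c| ^ (θ - 1) + |b| ^ (θ - 1)) * |b| := by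
      have h2 : (0:ℝ) ≤ |b| ^ (θ - 1) := Real.rpow_nonneg (abs_nonneg _) _
      exact mul_le_mul_of_nonneg_right
        (mul_le_mul_of_nonneg_left (le_add_of_nonneg_right h2) (by linarith))
        (abs_nonneg b)
    exact key.trans hmono
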